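/- arXiv:2004.09975 — 4 statements merged into one kernel-verified Lean document; each statement's English description precedes it below -/
import Mathlib

section
/- For every n ≥ 5, the map sending a solution (x,y) of x² + 2y² = n with gcd(x,y)=1, x ∈ ℕ positive, y ∈ ℤ nonzero, to the unique z ∈ ZMod n with z·y ≡ x (mod n), is a surjection onto the set of z ∈ ZMod n satisfying z² + 2 ≡ 0 (mod n). -/
/-- Descent core: if `n ∣ c² + 2` then `n` is represented by `x² + 2y²`
with `x ≡ c·y (mod n)`. -/
private lemma core_aux : ∀ n : ℕ, 1 ≤ n → ∀ c : ℤ, (n : ℤ) ∣ c ^ 2 + 2 →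
    ∃ x y : ℤ, x ^ 2 + 2 * y ^ 2 = (n : ℤ) ∧ (n : ℤ) ∣ x - c * y := by
  intro n
  induction n using Nat.strong_induction_on with
  | _ n ih =>
    intro hn c hc
    rcases Nat.lt_or_ge n 2 with h1 | h1
    · interval_cases n
      exact ⟨1, 0, by norm_num, by norm_num⟩
    · have hn0 : (0:ℤ) < (n:ℤ) := by exact_mod_cast Nat.lt_of_lt_of_le Nat.zero_lt_two h1
      have hn2 : (2:ℤ) ≤ (n:ℤ) := by exact_mod_cast h1
      set r := c % (n:ℤ) with hr
      have hr0 : 0 ≤ r := Int.emod_nonneg c hn0.ne'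
      have hrn : r < (n:ℤ) := Int.emod_lt_of_pos c hn0
      set c' : ℤ := if 2 * r ≤ (n:ℤ) then r else r - n with hc'def
      have habs : 4 * c' ^ 2 ≤ (n:ℤ) ^ 2 := by
        rcases le_or_gt (2*r) (n:ℤ) with h | h
        · simp only [hc'def, if_pos h]; nlinarith
        · simp only [hc'def, if_neg (not_le.mpr h)]; nlinarith
      have hcc' : (n:ℤ) ∣ c - c' := by
        rcases le_or_gt (2*r) (n:ℤ) with h | h
        · rw [hc'def, if_pos h, hr]
          exact Int.dvd_self_sub_of_emod_eq rfl
        · rw [hc'def, if_neg (not_le.mpr h), hr]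
          have he : c - (c % n - n) = (c - c % n) + n * 1 := by ring
          rw [he]
          exact dvd_add (Int.dvd_self_sub_of_emod_eq rfl) ⟨1, rfl⟩
      have hdvd : (n:ℤ) ∣ c' ^ 2 + 2 := by
        obtain ⟨k, hk⟩ := hcc'
        obtain ⟨j, hj⟩ := hc
        exact ⟨j - k * (c + c'), by linear_combination hj - hk * (c + c')⟩
      obtain ⟨m, hm⟩ := hdvd
      have hm0 : 0 < m := by nlinarith
      have hmn : m < (n:ℤ) := by nlinarith
      have hMeq : (m.toNat : ℤ) = m := Int.toNat_of_nonneg hm0.le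
      have hMn : m.toNat < n := by omega
      have hM1 : 1 ≤ m.toNat := by omega
      obtain ⟨s, t, hst, hst2⟩ := ih m.toNat hMn hM1 c'
        (by rw [hMeq]; exact ⟨n, by linarith [hm]⟩)
      rw [hMeq] at hst hst2
      obtain ⟨b, hb⟩ := hst2
      have hd1 : m ∣ c' * s + 2 * t :=
        ⟨c' * b + t * n, by linear_combination c' * hb + t * hm⟩
      obtain ⟨a, ha⟩ := hd1
      have hmne : m ≠ 0 := hm0.ne'
      refine ⟨a, b, ?_, ?_⟩
      · have key : m ^ 2 * (a ^ 2 + 2 * b ^ 2) = m ^ 2 * (n:ℤ) := by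
          linear_combination (-(m*a + c'*s + 2*t))*ha - 2*(m*b + s - c'*t)*hb
            + (c'^2+2)*hst + m*hm
        exact mul_left_cancel₀ (pow_ne_zero 2 hmne) key
      · have h2 : a - c' * b = t * n := by
          have : m * (a - c' * b) = m * (t * n) := by
            linear_combination -ha + c' * hb + t * hm
          exact mul_left_cancel₀ hmne this
        obtain ⟨k, hk⟩ := hcc'
        exact ⟨t - k * b, by linear_combination h2 - b * hk⟩

private lemma gcd_one_aux (n : ℕ) (hn : 0 < n) (c x y : ℤ) (hc : (n:ℤ) ∣ c ^ 2 + 2)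
    (hxy : x ^ 2 + 2 * y ^ 2 = (n:ℤ)) (hcong : (n:ℤ) ∣ x - c * y) : Int.gcd x y = 1 := by
  by_contra hne
  have hd0 : Int.gcd x y ≠ 0 := by
    intro h
    rw [Int.gcd_eq_zero_iff] at h
    rw [h.1, h.2] at hxy
    simp at hxy
    omega
  set p := (Int.gcd x y).minFac with hp
  have hpp : p.Prime := Nat.minFac_prime hne
  have hpx : (p:ℤ) ∣ x :=
    dvd_trans (Int.natCast_dvd_natCast.mpr (Nat.minFac_dvd _)) (Int.gcd_dvd_left x y)
  have hpy : (p:ℤ) ∣ y :=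
    dvd_trans (Int.natCast_dvd_natCast.mpr (Nat.minFac_dvd _)) (Int.gcd_dvd_right x y)
  obtain ⟨u, hu⟩ := hpx
  obtain ⟨v, hv⟩ := hpy
  set N : ℤ := u ^ 2 + 2 * v ^ 2 with hN
  have hn' : (n:ℤ) = (p:ℤ) ^ 2 * N := by rw [← hxy, hu, hv, hN]; ring
  have hp0 : (p:ℤ) ≠ 0 := by exact_mod_cast hpp.ne_zero
  have hN0 : N ≠ 0 := by
    intro h
    rw [h, mul_zero] at hn'
    have : n = 0 := by exact_mod_cast hn'
    omega
  obtain ⟨k0, hk0⟩ := hcong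
  have hk : u - c * v = (p:ℤ) * N * k0 := by
    apply mul_left_cancel₀ hp0
    rw [hu, hv] at hk0
    linear_combination hk0 + k0 * hn'
  obtain ⟨j, hj⟩ := hc
  have hj' : c ^ 2 + 2 = (p:ℤ) ^ 2 * N * j := by rw [hj, hn']
  have key : N * 1 = N * ((p:ℤ) * (k0 * (u + c * v) + v ^ 2 * (p:ℤ) * j)) := by
    linear_combination (u + c*v) * hk + v^2 * hj'
  have h1 : (1:ℤ) = (p:ℤ) * (k0 * (u + c * v) + v ^ 2 * (p:ℤ) * j) :=
    mul_left_cancel₀ hN0 key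
  have hdvd1 : (p:ℤ) ∣ 1 := ⟨_, h1⟩
  have := Int.le_of_dvd one_pos hdvd1
  have h2 : (2:ℤ) ≤ (p:ℤ) := by exact_mod_cast hpp.two_le
  linarith

theorem stmt_3 (n : ℕ) (hn : 5 ≤ n) :
    ∀ z : ZMod n, z ^ 2 + 2 = 0 →
      ∃ x y : ℤ, 0 < x ∧ y ≠ 0 ∧ Int.gcd x y = 1 ∧
        x ^ 2 + 2 * y ^ 2 = (n : ℤ) ∧ z * (y : ZMod n) = (x : ZMod n) := by
  intro z hz
  haveI : NeZero n := ⟨by omega⟩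
  set c : ℤ := (z.val : ℤ) with hcdef
  have hczn : ((c : ℤ) : ZMod n) = z := by
    rw [hcdef]
    push_cast
    simp [ZMod.natCast_val, ZMod.cast_id]
  have hc : (n:ℤ) ∣ c ^ 2 + 2 := by
    rw [← ZMod.intCast_zmod_eq_zero_iff_dvd]
    push_cast
    rw [hczn, hz]
  obtain ⟨x, y, hxy, hcong⟩ := core_aux n (by omega) c hc
  have hg : Int.gcd x y = 1 := gcd_one_aux n (by omega) c x y hc hxy hcong
  have hy0 : y ≠ 0 := by
    rintro rfl
    simp [Int.gcd] at hg
    rcases Int.natAbs_eq_iff.mp hg with h | h <;> rw [h] at hxy <;> norm_num at hxy <;> omega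
  have hx0 : x ≠ 0 := by
    rintro rfl
    simp [Int.gcd] at hg
    rcases Int.natAbs_eq_iff.mp hg with h | h <;> rw [h] at hxy <;> norm_num at hxy <;> omega
  have hzm : z * (y : ZMod n) = (x : ZMod n) := by
    have h0 : ((x - c * y : ℤ) : ZMod n) = 0 :=
      (ZMod.intCast_zmod_eq_zero_iff_dvd _ _).mpr hcong
    push_cast at h0
    rw [hczn] at h0
    have := sub_eq_zero.mp h0
    rw [← this]
  rcases lt_trichotomy x 0 with hx | hx | hx
  · refine ⟨-x, -y, by linarith, neg_ne_zero.mpr hy0, ?_, by linear_combination hxy, ?_⟩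
    · rwa [Int.neg_gcd, Int.gcd_neg]
    · push_cast
      rw [mul_neg, hzm]
  · exact absurd hx hx0
  · exact ⟨x, y, hx, hy0, hg, hxy, hzm⟩
end

section
/- Let n ≥ 5 and let z be an integer with z² + 2 ≡ 0 (mod n). Let a, q be integers with 1 ≤ q ≤ √n, gcd(a,q)=1, and |z/n - a/q| < 1/(q√n). Set r = zq - an. Then n divides r² + 2q², |r| < √n, and 0 < r² + 2q² < 3n; consequently r² + 2q² = n or r² + 2q² = 2n. -/
theorem stmt_8 (n : ℕ) (hn : 5 ≤ n) (z a q : ℤ)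
    (hz : (n : ℤ) ∣ z ^ 2 + 2)
    (hq1 : 1 ≤ q) (hq2 : (q : ℝ) ≤ Real.sqrt n)
    (hcop : Int.gcd a q = 1)
    (happrox : |(z : ℝ) / n - (a : ℝ) / q| < 1 / (q * Real.sqrt n))
    (r : ℤ) (hr : r = z * q - a * n) :
    (n : ℤ) ∣ r ^ 2 + 2 * q ^ 2 ∧
    (|r| : ℝ) < Real.sqrt n ∧
    0 < r ^ 2 + 2 * q ^ 2 ∧ r ^ 2 + 2 * q ^ 2 < 3 * n ∧
    (r ^ 2 + 2 * q ^ 2 = (n : ℤ) ∨ r ^ 2 + 2 * q ^ 2 = 2 * n) := by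
  have hn0 : (0:ℤ) < n := by exact_mod_cast Nat.pos_of_ne_zero (by omega)
  have hnR : (0:ℝ) < (n:ℝ) := by exact_mod_cast hn0
  have hqR : (0:ℝ) < (q:ℝ) := by exact_mod_cast hq1
  have hsq : (0:ℝ) < Real.sqrt n := Real.sqrt_pos.2 hnR
  obtain ⟨k, hk⟩ := hz
  have hdiv : (n : ℤ) ∣ r ^ 2 + 2 * q ^ 2 := by
    refine ⟨q ^ 2 * k + a ^ 2 * n - 2 * z * q * a, ?_⟩
    subst hr
    linear_combination q ^ 2 * hk
  -- |r| < sqrt n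
  have key : ((z:ℝ) / n - (a:ℝ) / q) = (r : ℝ) / (n * q) := by
    subst hr
    push_cast
    field_simp
  have habs : (|r| : ℝ) < Real.sqrt n := by
    have h1 : |(r : ℝ)| / (n * q) < 1 / (q * Real.sqrt n) := by
      rw [← abs_of_pos (mul_pos hnR hqR), ← abs_div, ← key]; exact happrox
    have h2 : |(r : ℝ)| < (n * q) * (1 / (q * Real.sqrt n)) := by
      rw [div_lt_iff₀ (mul_pos hnR hqR)] at h1
      linarith [h1]
    have h3 : (n : ℝ) * q * (1 / (q * Real.sqrt n)) = (n:ℝ) / Real.sqrt n := by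
      have := Real.mul_self_sqrt (le_of_lt hnR)
      field_simp
    rw [h3, Real.div_sqrt] at h2
    exact_mod_cast h2
  have hr2 : r ^ 2 < (n : ℤ) := by
    have : (|r| : ℝ) ^ 2 < Real.sqrt n ^ 2 :=
      pow_lt_pow_left₀ habs (by positivity) (by norm_num)
    rw [Real.sq_sqrt (le_of_lt hnR)] at this
    have : ((r:ℝ)) ^ 2 < (n:ℝ) := by rwa [← sq_abs]; 
    exact_mod_cast this
  have hq2' : q ^ 2 ≤ (n : ℤ) := by
    have : (q : ℝ) ^ 2 ≤ Real.sqrt n ^ 2 :=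
      pow_le_pow_left₀ (le_of_lt hqR) hq2 2
    rw [Real.sq_sqrt (le_of_lt hnR)] at this
    exact_mod_cast this
  have hpos : 0 < r ^ 2 + 2 * q ^ 2 := by positivity
  have hlt : r ^ 2 + 2 * q ^ 2 < 3 * n := by linarith
  refine ⟨hdiv, habs, hpos, hlt, ?_⟩
  obtain ⟨m, hm⟩ := hdiv
  have hm1 : 0 < m := by
    by_contra h
    push_neg at h
    nlinarith
  have hm2 : m < 3 := by
    by_contra h
    push_neg at h
    nlinarith
  interval_cases m
  · left; omega
  · right; omega
end

section
/- Let n, z, q, a, r be integers with n ∣ z² + 2, r = zq − an, and r² + 2q² = n. Then r·a + 1 = k·q where k = ((z²+2)/n)·q − a·z is an integer; in particular gcd(r, q) = 1. -/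
theorem stmt_9 (n z a q r : ℤ) (hn : 1 ≤ n) (hdvd : n ∣ z ^ 2 + 2)
    (hr : r = z * q - a * n) (heq : r ^ 2 + 2 * q ^ 2 = n) :
    r * a + 1 = ((z ^ 2 + 2) / n * q - a * z) * q ∧ Int.gcd r q = 1 := by
  obtain ⟨m, hm⟩ := hdvd
  have hn0 : n ≠ 0 := by linarith
  have hdiv : (z ^ 2 + 2) / n = m := by
    rw [hm, Int.mul_ediv_cancel_left _ hn0]
  have key : m * q ^ 2 - 2 * a * z * q + a ^ 2 * n = 1 := by
    have h1 : n * (m * q ^ 2 - 2 * a * z * q + a ^ 2 * n) = n * 1 := by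
      subst hr
      linear_combination heq - q ^ 2 * hm
    exact mul_left_cancel₀ hn0 h1
  have h2 : r * a + 1 = (m * q - a * z) * q := by
    subst hr
    linear_combination -key
  constructor
  · rw [hdiv]; exact h2
  · rw [← Int.isCoprime_iff_gcd_eq_one]
    exact ⟨-a, m * q - a * z, by linarith [h2]⟩
end

section
/- Let n, z, q, a, r be integers with n ∣ z² + 2, r = zq − an, and r² + 2q² = 2n. Then r·a + 2 = k·q where k = ((z²+2)/n)·q − a·z ∈ ℤ; consequently gcd(r, q) ≤ 2. -/
theorem stmt_10 (n z a q r : ℤ) (hn : 1 ≤ n) (hdvd : n ∣ z ^ 2 + 2)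
    (hr : r = z * q - a * n) (heq : r ^ 2 + 2 * q ^ 2 = 2 * n) :
    r * a + 2 = ((z ^ 2 + 2) / n * q - a * z) * q ∧ Int.gcd r q ≤ 2 := by
  obtain ⟨m, hm⟩ := hdvd
  have hn0 : n ≠ 0 := by omega
  have hdiv : (z ^ 2 + 2) / n = m := by
    rw [hm]; exact Int.mul_ediv_cancel_left m hn0
  have hkey : n * (r * a + 2) = n * ((m * q - a * z) * q) := by
    subst hr
    linear_combination -heq + q ^ 2 * hm
  have h1 : r * a + 2 = ((z ^ 2 + 2) / n * q - a * z) * q := by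
    rw [hdiv]; exact mul_left_cancel₀ hn0 hkey
  refine ⟨h1, ?_⟩
  have hd2 : (Int.gcd r q : ℤ) ∣ 2 := by
    have h2 : (2 : ℤ) = ((z ^ 2 + 2) / n * q - a * z) * q - r * a := by linarith
    rw [h2]
    exact dvd_sub (Dvd.dvd.mul_left (Int.gcd_dvd_right r q) _)
      (Dvd.dvd.mul_right (Int.gcd_dvd_left r q) _)
  exact Nat.le_of_dvd two_pos (Int.ofNat_dvd.mp (by exact_mod_cast hd2))
end
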